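/- Let p ≥ 1, t ≥ 2 and e ≥ 2 be integers, let S = k[y_1,…,y_{(t+1)p}], and for j = 1,…,t set F_j = ∑_{i=1}^{p} y_{jp+i} · y_i^{e−1}, and let V = span(F_1,…,F_t). Then F_1,…,F_t are linearly independent (so dim_k V = t), and for every integer c with 1 ≤ c ≤ t and every c-dimensional k-subspace W ⊆ V one has h_u(W) = (c+1)·p for every integer u with 1 ≤ u ≤ e−1. In particular (taking c = t) h_u(V) = (t+1)p for 1 ≤ u ≤ e−1, so the lower bound of the Main Theorem, (t²−1)·h_u(W) ≥ (t−c)·h_{e−u}(V) + (c·t−1)·h_u(V), is attained with equality for these algebras. -/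

import Mathlib

open MvPolynomial

/-- One step of differentiation: the span of all first partial derivatives of elements of `W`. -/
noncomputable def derStep (k : Type*) [Field k] {σ : Type*}
    (W : Submodule k (MvPolynomial σ k)) : Submodule k (MvPolynomial σ k) :=
  Submodule.span k (⋃ i : σ, pderiv i '' (W : Set (MvPolynomial σ k)))

/-- For `W ⊆ S_e` and `u ≤ e`, `hvec k e W u = h_u(W)` is the dimension of the space `D_u(W)`
spanned by the order `e - u` partial derivatives of the elements of `W`. -/
noncomputable def hvec (k : Type*) [Field k] {σ : Type*} (e : ℕ)
    (W : Submodule k (MvPolynomial σ k)) (u : ℕ) : ℕ :=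
  Module.finrank k ((derStep k)^[e - u] W)


set_option linter.unusedSectionVars false

namespace Ex211

theorem derStep_span (k : Type*) [Field k] {σ : Type*} (T : Set (MvPolynomial σ k)) :
    derStep k (Submodule.span k T) = Submodule.span k (⋃ i : σ, pderiv i '' T) := by
  apply le_antisymm
  · rw [derStep, Submodule.span_le]
    rintro x hx
    simp only [Set.mem_iUnion, Set.mem_image, SetLike.mem_coe] at hx
    obtain ⟨i, y, hy, rfl⟩ := hx
    have h1 : pderiv i y ∈ Submodule.map (pderiv (R := k) i).toLinearMap (Submodule.span k T) :=
      ⟨y, hy, rfl⟩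
    rw [Submodule.map_span] at h1
    refine SetLike.le_def.mp (Submodule.span_mono ?_) h1
    exact Set.subset_iUnion (fun i => (pderiv (R := k) i) '' T) i
  · exact Submodule.span_mono (Set.iUnion_mono fun i => Set.image_mono Submodule.subset_span)

variable {k : Type*} [Field k] [CharZero k]

section
variable (p t : ℕ)

/-- first block of variables -/
def i1 (i : Fin p) : Fin ((t + 1) * p) :=
  ⟨i.1, lt_of_lt_of_le i.2 (Nat.le_mul_of_pos_left p (by omega))⟩

/-- later blocks of variables -/
def i2 (j : Fin t) (i : Fin p) : Fin ((t + 1) * p) :=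
  ⟨(j.1 + 1) * p + i.1, by
    have h1 : j.1 + 1 + 1 ≤ t + 1 := by omega
    have h2 := i.2
    calc (j.1 + 1) * p + i.1 < (j.1 + 1) * p + p := by omega
      _ = (j.1 + 1 + 1) * p := by ring
      _ ≤ (t + 1) * p := Nat.mul_le_mul_right p h1⟩

theorem i1_ne_i2 (i i' : Fin p) (j : Fin t) : i1 p t i ≠ i2 p t j i' := by
  intro h
  have h1 : i.1 = (j.1 + 1) * p + i'.1 := by simpa [i1, i2] using congrArg Fin.val h
  have h2 : p ≤ (j.1 + 1) * p := Nat.le_mul_of_pos_left p (by omega)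
  have := i.2
  omega

theorem i1_inj {i i' : Fin p} (h : i1 p t i = i1 p t i') : i = i' :=
  Fin.ext (by simpa [i1] using congrArg Fin.val h)

theorem i2_inj {i i' : Fin p} {j j' : Fin t} (h : i2 p t j i = i2 p t j' i') :
    j = j' ∧ i = i' := by
  have h1 : (j.1 + 1) * p + i.1 = (j'.1 + 1) * p + i'.1 := by
    simpa [i2] using congrArg Fin.val h
  have h2 := i.2; have h3 := i'.2
  have hj : j.1 = j'.1 := by
    rcases Nat.lt_trichotomy j.1 j'.1 with hl | he | hl
    · nlinarith
    · exact he
    · nlinarith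
  constructor
  · exact Fin.ext hj
  · apply Fin.ext; rw [hj] at h1; omega

variable {c : ℕ} (A : Fin c → Fin t → k) (e : ℕ)

theorem pderiv_X_pow' {σ : Type*} [DecidableEq σ] (v a : σ) (u : ℕ) :
    pderiv v ((X a : MvPolynomial σ k) ^ u) =
      if v = a then (u : k) • X a ^ (u - 1) else 0 := by
  by_cases h : v = a
  · subst h
    rw [if_pos rfl, pderiv_pow, pderiv_X_self, mul_one, ← C_eq_coe_nat, C_mul']
  · rw [if_neg h, pderiv_pow, pderiv_X_of_ne (Ne.symm h), mul_zero]

theorem X_mul_X_pow_eq {σ : Type*} (a b : σ) (d : ℕ) :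
    (X a : MvPolynomial σ k) * X b ^ d =
      monomial (Finsupp.single a 1 + Finsupp.single b d) 1 := by
  rw [← pow_one (X a), X_pow_eq_monomial, X_pow_eq_monomial, monomial_mul, one_mul]

/-- the linear forms -/
noncomputable def Lf (m : Fin c) (i : Fin p) : MvPolynomial (Fin ((t + 1) * p)) k :=
  ∑ j, A m j • X (i2 p t j i)

/-- the generators of the derived spaces -/
noncomputable def Lg (u : ℕ) : Fin p ⊕ Fin c × Fin p → MvPolynomial (Fin ((t + 1) * p)) k :=
  fun x => match x with
  | .inl i => X (i1 p t i) ^ u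
  | .inr (m, i) => Lf p t A m i * X (i1 p t i) ^ (u - 1)

theorem pderiv_Lf (v : Fin ((t + 1) * p)) (m : Fin c) (i : Fin p) :
    pderiv v (Lf p t A m i) = C (∑ j, A m j * if v = i2 p t j i then 1 else 0) := by
  rw [Lf, map_sum, map_sum]
  refine Finset.sum_congr rfl fun j _ => ?_
  rw [Derivation.map_smul]
  by_cases h : v = i2 p t j i
  · rw [if_pos h, h, pderiv_X_self, mul_one]
    simp [smul_eq_C_mul]
  · rw [if_neg h, pderiv_X_of_ne (Ne.symm h), mul_zero, map_zero, smul_zero]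

theorem pderiv_Lf_i1 (i' : Fin p) (m : Fin c) (i : Fin p) :
    pderiv (i1 p t i') (Lf p t A m i) = 0 := by
  rw [pderiv_Lf]
  have : ∀ j : Fin t, A m j * (if i1 p t i' = i2 p t j i then (1:k) else 0) = 0 := fun j => by
    rw [if_neg (i1_ne_i2 p t i' i j), mul_zero]
  rw [Finset.sum_congr rfl fun j _ => this j, Finset.sum_const_zero, map_zero]

theorem pderiv_Lf_i2 (j' : Fin t) (i' : Fin p) (m : Fin c) (i : Fin p) :
    pderiv (i2 p t j' i') (Lf p t A m i) = if i' = i then C (A m j') else 0 := by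
  rw [pderiv_Lf]
  by_cases h : i' = i
  · subst h
    rw [if_pos rfl]
    congr 1
    rw [Finset.sum_eq_single j']
    · rw [if_pos rfl, mul_one]
    · intro j _ hj
      rw [if_neg (fun hc => hj ((i2_inj p t hc).1.symm)), mul_zero]
    · intro h; exact absurd (Finset.mem_univ j') h
  · rw [if_neg h]
    have : ∀ j : Fin t, A m j * (if i2 p t j' i' = i2 p t j i then (1:k) else 0) = 0 := fun j => by
      rw [if_neg (fun hc => h (i2_inj p t hc).2), mul_zero]
    rw [Finset.sum_congr rfl fun j _ => this j, Finset.sum_const_zero, map_zero]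

theorem pderiv_T (v : Fin ((t + 1) * p)) (m : Fin c) (i : Fin p) (d : ℕ) :
    pderiv v (Lf p t A m i * X (i1 p t i) ^ d) =
      C (∑ j, A m j * if v = i2 p t j i then 1 else 0) * X (i1 p t i) ^ d +
        (if v = i1 p t i then (d : k) • (Lf p t A m i * X (i1 p t i) ^ (d - 1)) else 0) := by
  rw [pderiv_mul, pderiv_Lf, pderiv_X_pow']
  congr 1
  by_cases h : v = i1 p t i
  · rw [if_pos h, if_pos h, mul_smul_comm]
  · rw [if_neg h, if_neg h, mul_zero]

theorem pderiv_mem_span {σ ι : Type*} (f : ι → MvPolynomial σ k) (v : σ) (y : ι) :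
    pderiv v (f y) ∈ Submodule.span k (⋃ w : σ, pderiv w '' Set.range f) :=
  Submodule.subset_span (Set.mem_iUnion.2 ⟨v, ⟨f y, ⟨y, rfl⟩, rfl⟩⟩)

theorem derStep_Lg (u : ℕ) (hu : 1 ≤ u) :
    derStep k (Submodule.span k (Set.range (Lg p t A (u + 1)))) =
      Submodule.span k (Set.range (Lg p t A u)) := by
  rw [derStep_span]
  apply le_antisymm
  · rw [Submodule.span_le]
    rintro x hx
    simp only [Set.mem_iUnion, Set.mem_image, Set.mem_range, exists_exists_eq_and] at hx
    obtain ⟨v, y, rfl⟩ := hx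
    match y with
    | .inl i =>
      show pderiv v (X (i1 p t i) ^ (u + 1)) ∈ _
      rw [pderiv_X_pow']
      split_ifs
      · refine Submodule.smul_mem _ _ (Submodule.subset_span ⟨Sum.inl i, ?_⟩)
        show X (i1 p t i) ^ u = _
        rw [Nat.add_sub_cancel]
      · exact Submodule.zero_mem _
    | .inr (m, i) =>
      show pderiv v (Lf p t A m i * X (i1 p t i) ^ (u + 1 - 1)) ∈ _
      rw [Nat.add_sub_cancel, pderiv_T]
      refine Submodule.add_mem _ ?_ ?_
      · rw [C_mul']
        exact Submodule.smul_mem _ _ (Submodule.subset_span ⟨Sum.inl i, rfl⟩)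
      · split_ifs
        · exact Submodule.smul_mem _ _ (Submodule.subset_span ⟨Sum.inr (m, i), rfl⟩)
        · exact Submodule.zero_mem _
  · rw [Submodule.span_le]
    rintro x ⟨y, rfl⟩
    match y with
    | .inl i =>
      have hmem := pderiv_mem_span (Lg p t A (u + 1)) (i1 p t i) (Sum.inl i)
      have hval : pderiv (i1 p t i) (Lg p t A (u + 1) (Sum.inl i)) =
          ((u + 1 : ℕ) : k) • X (i1 p t i) ^ u := by
        show pderiv (i1 p t i) (X (i1 p t i) ^ (u + 1)) = _
        rw [pderiv_X_pow', if_pos rfl, Nat.add_sub_cancel]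
      rw [hval] at hmem
      have h2 := Submodule.smul_mem _ (((u + 1 : ℕ) : k))⁻¹ hmem
      rw [smul_smul, inv_mul_cancel₀ (by exact_mod_cast Nat.succ_ne_zero u), one_smul] at h2
      exact h2
    | .inr (m, i) =>
      have hmem := pderiv_mem_span (Lg p t A (u + 1)) (i1 p t i) (Sum.inr (m, i))
      have hval : pderiv (i1 p t i) (Lg p t A (u + 1) (Sum.inr (m, i))) =
          ((u : ℕ) : k) • (Lf p t A m i * X (i1 p t i) ^ (u - 1)) := by
        show pderiv (i1 p t i) (Lf p t A m i * X (i1 p t i) ^ (u + 1 - 1)) = _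
        rw [Nat.add_sub_cancel, pderiv_T]
        have hz : (∑ j, A m j * if i1 p t i = i2 p t j i then (1:k) else 0) = 0 :=
          Finset.sum_eq_zero fun j _ => by rw [if_neg (i1_ne_i2 p t i i j), mul_zero]
        rw [hz, map_zero, zero_mul, zero_add, if_pos rfl]
      rw [hval] at hmem
      have h2 := Submodule.smul_mem _ (((u : ℕ) : k))⁻¹ hmem
      rw [smul_smul, inv_mul_cancel₀ (Nat.cast_ne_zero.mpr (by omega)), one_smul] at h2
      exact h2

theorem derStep_G (he : 2 ≤ e) (m0 : Fin c) (j0 : Fin t) (h0 : A m0 j0 ≠ 0) :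
    derStep k (Submodule.span k
        (Set.range (fun m => ∑ i, Lf p t A m i * X (i1 p t i) ^ (e - 1)))) =
      Submodule.span k (Set.range (Lg p t A (e - 1))) := by
  set G : Fin c → MvPolynomial (Fin ((t + 1) * p)) k :=
    fun m => ∑ i, Lf p t A m i * X (i1 p t i) ^ (e - 1) with hG
  rw [derStep_span]
  apply le_antisymm
  · rw [Submodule.span_le]
    rintro x hx
    simp only [Set.mem_iUnion, Set.mem_image, Set.mem_range, exists_exists_eq_and] at hx
    obtain ⟨v, m, rfl⟩ := hx
    show pderiv v (G m) ∈ _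
    rw [hG, map_sum]
    refine Submodule.sum_mem _ fun i _ => ?_
    rw [pderiv_T]
    refine Submodule.add_mem _ ?_ ?_
    · rw [C_mul']
      exact Submodule.smul_mem _ _ (Submodule.subset_span ⟨Sum.inl i, rfl⟩)
    · split_ifs
      · exact Submodule.smul_mem _ _ (Submodule.subset_span ⟨Sum.inr (m, i), rfl⟩)
      · exact Submodule.zero_mem _
  · rw [Submodule.span_le]
    rintro x ⟨y, rfl⟩
    match y with
    | .inl i =>
      have hmem := pderiv_mem_span G (i2 p t j0 i) m0
      have hval : pderiv (i2 p t j0 i) (G m0) = A m0 j0 • X (i1 p t i) ^ (e - 1) := by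
        rw [hG, map_sum]
        have hterm : ∀ i' : Fin p,
            pderiv (i2 p t j0 i) (Lf p t A m0 i' * X (i1 p t i') ^ (e - 1)) =
              if i' = i then A m0 j0 • X (i1 p t i) ^ (e - 1) else 0 := by
          intro i'
          rw [pderiv_mul, pderiv_Lf_i2, pderiv_X_pow',
            if_neg (Ne.symm (i1_ne_i2 p t i' i j0)), mul_zero, add_zero]
          by_cases h : i' = i
          · subst h; rw [if_pos rfl, if_pos rfl, C_mul']
          · rw [if_neg (fun hc : i = i' => h hc.symm), if_neg h, zero_mul]
        rw [Finset.sum_congr rfl fun i' _ => hterm i', Finset.sum_ite_eq' Finset.univ i,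
          if_pos (Finset.mem_univ i)]
      rw [hval] at hmem
      have h2 := Submodule.smul_mem _ (A m0 j0)⁻¹ hmem
      rw [smul_smul, inv_mul_cancel₀ h0, one_smul] at h2
      exact h2
    | .inr (m, i) =>
      have hmem := pderiv_mem_span G (i1 p t i) m
      have hval : pderiv (i1 p t i) (G m) =
          ((e - 1 : ℕ) : k) • (Lf p t A m i * X (i1 p t i) ^ (e - 1 - 1)) := by
        rw [hG, map_sum]
        have hterm : ∀ i' : Fin p,
            pderiv (i1 p t i) (Lf p t A m i' * X (i1 p t i') ^ (e - 1)) =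
              if i' = i then
                ((e - 1 : ℕ) : k) • (Lf p t A m i * X (i1 p t i) ^ (e - 1 - 1)) else 0 := by
          intro i'
          rw [pderiv_mul, pderiv_Lf_i1, zero_mul, zero_add, pderiv_X_pow']
          by_cases h : i' = i
          · subst h; rw [if_pos rfl, if_pos rfl, mul_smul_comm]
          · rw [if_neg (fun hc => h (i1_inj p t hc).symm), if_neg h, mul_zero]
        rw [Finset.sum_congr rfl fun i' _ => hterm i', Finset.sum_ite_eq' Finset.univ i,
          if_pos (Finset.mem_univ i)]
      rw [hval] at hmem
      have h2 := Submodule.smul_mem _ (((e - 1 : ℕ) : k))⁻¹ hmem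
      rw [smul_smul, inv_mul_cancel₀ (Nat.cast_ne_zero.mpr (by omega)), one_smul] at h2
      exact h2

theorem iterate_G (he : 2 ≤ e) (m0 : Fin c) (j0 : Fin t) (h0 : A m0 j0 ≠ 0)
    (s : ℕ) (hs1 : 1 ≤ s) (hs2 : s ≤ e - 1) :
    (derStep k)^[s] (Submodule.span k
        (Set.range (fun m => ∑ i, Lf p t A m i * X (i1 p t i) ^ (e - 1)))) =
      Submodule.span k (Set.range (Lg p t A (e - s))) := by
  induction s with
  | zero => omega
  | succ n ih =>
    by_cases hn : n = 0
    · subst hn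
      rw [Function.iterate_one, derStep_G p t A e he m0 j0 h0]
    · rw [Function.iterate_succ_apply', ih (by omega) (by omega)]
      have h1 : e - n = (e - (n + 1)) + 1 := by omega
      rw [h1, derStep_Lg p t A (e - (n + 1)) (by omega)]

theorem mono_ne (i i' : Fin p) (j : Fin t) (d u' : ℕ) :
    Finsupp.single (i2 p t j i) 1 + Finsupp.single (i1 p t i) d ≠
      Finsupp.single (i1 p t i') u' := by
  intro h
  have h2 := DFunLike.congr_fun h (i2 p t j i)
  rw [Finsupp.add_apply, Finsupp.single_eq_same, Finsupp.single_eq_of_ne' (i1_ne_i2 p t i i j),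
    Finsupp.single_eq_of_ne' (i1_ne_i2 p t i' i j)] at h2
  omega

theorem mono_inj2 {i i' : Fin p} {j j' : Fin t} {d : ℕ}
    (h : Finsupp.single (i2 p t j i) 1 + Finsupp.single (i1 p t i) d =
      Finsupp.single (i2 p t j' i') 1 + Finsupp.single (i1 p t i') d) : j = j' ∧ i = i' := by
  have h2 := DFunLike.congr_fun h (i2 p t j i)
  rw [Finsupp.add_apply, Finsupp.add_apply, Finsupp.single_eq_same,
    Finsupp.single_eq_of_ne' (i1_ne_i2 p t i i j),
    Finsupp.single_eq_of_ne' (i1_ne_i2 p t i' i j)] at h2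
  by_cases hc : i2 p t j' i' = i2 p t j i
  · obtain ⟨hj, hi⟩ := i2_inj p t hc; exact ⟨hj.symm, hi.symm⟩
  · rw [Finsupp.single_eq_of_ne' hc] at h2; omega

theorem mono_inj1 {i i' : Fin p} {u : ℕ} (hu : u ≠ 0)
    (h : Finsupp.single (i1 p t i) u = Finsupp.single (i1 p t i') u) : i = i' := by
  have h2 := DFunLike.congr_fun h (i1 p t i)
  rw [Finsupp.single_eq_same] at h2
  by_cases hc : i1 p t i' = i1 p t i
  · exact (i1_inj p t hc).symm
  · rw [Finsupp.single_eq_of_ne' hc] at h2; omega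

theorem Lf_mul_pow (m : Fin c) (i : Fin p) (d : ℕ) :
    Lf p t A m i * X (i1 p t i) ^ d =
      ∑ j, monomial (Finsupp.single (i2 p t j i) 1 + Finsupp.single (i1 p t i) d) (A m j) := by
  rw [Lf, Finset.sum_mul]
  refine Finset.sum_congr rfl fun j _ => ?_
  rw [smul_mul_assoc, X_mul_X_pow_eq, smul_monomial, smul_eq_mul, mul_one]

theorem coeff_a (i i' : Fin p) (u : ℕ) (hu : u ≠ 0) :
    coeff (Finsupp.single (i1 p t i') u) ((X (i1 p t i) : MvPolynomial (Fin ((t+1)*p)) k) ^ u) =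
      if i = i' then 1 else 0 := by
  rw [coeff_X_pow]
  by_cases h : i = i'
  · subst h; rw [if_pos rfl, if_pos rfl]
  · rw [if_neg (fun hc => h (mono_inj1 p t hu hc)), if_neg h]

theorem coeff_b (m : Fin c) (i i' : Fin p) (d u' : ℕ) :
    coeff (Finsupp.single (i1 p t i') u') (Lf p t A m i * X (i1 p t i) ^ d) = 0 := by
  rw [Lf_mul_pow, coeff_sum]
  exact Finset.sum_eq_zero fun j _ => by
    rw [coeff_monomial, if_neg (mono_ne p t i i' j d u')]

theorem coeff_c (i i' : Fin p) (j' : Fin t) (u d : ℕ) :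
    coeff (Finsupp.single (i2 p t j' i') 1 + Finsupp.single (i1 p t i') d)
      ((X (i1 p t i) : MvPolynomial (Fin ((t+1)*p)) k) ^ u) = 0 := by
  rw [coeff_X_pow, if_neg (fun hc => mono_ne p t i' i j' d u hc.symm)]

theorem coeff_d (m : Fin c) (i i' : Fin p) (j' : Fin t) (d : ℕ) :
    coeff (Finsupp.single (i2 p t j' i') 1 + Finsupp.single (i1 p t i') d)
      (Lf p t A m i * X (i1 p t i) ^ d) = if i = i' then A m j' else 0 := by
  rw [Lf_mul_pow, coeff_sum]
  by_cases h : i = i'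
  · subst h
    rw [if_pos rfl, Finset.sum_eq_single j']
    · rw [coeff_monomial, if_pos rfl]
    · intro j _ hj
      rw [coeff_monomial, if_neg (fun hc => hj (mono_inj2 p t hc).1)]
    · intro h; exact absurd (Finset.mem_univ j') h
  · rw [if_neg h]
    exact Finset.sum_eq_zero fun j _ => by
      rw [coeff_monomial, if_neg (fun hc => h (mono_inj2 p t hc).2)]

theorem indep_Lg (hA : LinearIndependent k A) (u : ℕ) (hu : 1 ≤ u) :
    LinearIndependent k (Lg p t A u) := by
  rw [Fintype.linearIndependent_iff]
  intro g hg
  have key : ∀ d : Fin ((t + 1) * p) →₀ ℕ,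
      (∑ x, g x * coeff d (Lg p t A u x)) = 0 := by
    intro d
    have h1 := congrArg (lcoeff k d) hg
    rw [map_sum, map_zero] at h1
    simpa only [map_smul, smul_eq_mul, lcoeff_apply] using h1
  have hinl : ∀ i' : Fin p, g (Sum.inl i') = 0 := by
    intro i'
    have h1 := key (Finsupp.single (i1 p t i') u)
    rw [Fintype.sum_sum_type] at h1
    have e1 : ∀ i : Fin p, g (Sum.inl i) * coeff (Finsupp.single (i1 p t i') u)
        (Lg p t A u (Sum.inl i)) = if i = i' then g (Sum.inl i) else 0 := by
      intro i
      show g (Sum.inl i) * coeff _ (X (i1 p t i) ^ u) = _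
      rw [coeff_a p t i i' u (by omega)]
      by_cases h : i = i'
      · rw [if_pos h, if_pos h, mul_one]
      · rw [if_neg h, if_neg h, mul_zero]
    have e2 : ∀ x : Fin c × Fin p, g (Sum.inr x) * coeff (Finsupp.single (i1 p t i') u)
        (Lg p t A u (Sum.inr x)) = 0 := by
      rintro ⟨m, i⟩
      show g (Sum.inr (m, i)) * coeff _ (Lf p t A m i * X (i1 p t i) ^ (u - 1)) = 0
      rw [coeff_b, mul_zero]
    rw [Finset.sum_congr rfl fun i _ => e1 i, Finset.sum_congr rfl fun x _ => e2 x,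
      Finset.sum_const_zero, add_zero, Finset.sum_ite_eq' Finset.univ i',
      if_pos (Finset.mem_univ i')] at h1
    exact h1
  have hinr : ∀ (m : Fin c) (i' : Fin p), g (Sum.inr (m, i')) = 0 := by
    intro m' i'
    have hrow : ∀ j' : Fin t, (∑ m, g (Sum.inr (m, i')) * A m j') = 0 := by
      intro j'
      have h1 := key (Finsupp.single (i2 p t j' i') 1 + Finsupp.single (i1 p t i') (u - 1))
      rw [Fintype.sum_sum_type] at h1
      have e1 : ∀ i : Fin p, g (Sum.inl i) *
          coeff (Finsupp.single (i2 p t j' i') 1 + Finsupp.single (i1 p t i') (u - 1))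
            (Lg p t A u (Sum.inl i)) = 0 := by
        intro i
        show g (Sum.inl i) * coeff _ (X (i1 p t i) ^ u) = 0
        rw [coeff_c, mul_zero]
      have e2 : ∀ x : Fin c × Fin p, g (Sum.inr x) *
          coeff (Finsupp.single (i2 p t j' i') 1 + Finsupp.single (i1 p t i') (u - 1))
            (Lg p t A u (Sum.inr x)) =
          if x.2 = i' then g (Sum.inr x) * A x.1 j' else 0 := by
        rintro ⟨m, i⟩
        show g (Sum.inr (m, i)) * coeff _ (Lf p t A m i * X (i1 p t i) ^ (u - 1)) = _
        rw [coeff_d]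
        by_cases h : i = i'
        · rw [if_pos h, if_pos h]
        · rw [if_neg h, if_neg h, mul_zero]
      rw [Finset.sum_congr rfl fun i _ => e1 i, Finset.sum_const_zero, zero_add,
        Finset.sum_congr rfl fun x _ => e2 x, Fintype.sum_prod_type] at h1
      have e3 : ∀ m : Fin c,
          (∑ i : Fin p, if i = i' then g (Sum.inr (m, i)) * A m j' else 0) =
            g (Sum.inr (m, i')) * A m j' := fun m => by
        rw [Finset.sum_ite_eq' Finset.univ i', if_pos (Finset.mem_univ i')]
      rw [Finset.sum_congr rfl fun m _ => e3 m] at h1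
      exact h1
    have hz := Fintype.linearIndependent_iff.mp hA (fun m => g (Sum.inr (m, i'))) ?_ m'
    · exact hz
    · funext j'
      have := hrow j'
      simpa only [Finset.sum_apply, Pi.smul_apply, smul_eq_mul, Pi.zero_apply] using this
  rintro (i' | ⟨m, i'⟩)
  · exact hinl i'
  · exact hinr m i'

theorem indep_G (hA : LinearIndependent k A) (hp : 1 ≤ p) (d : ℕ) :
    LinearIndependent k (fun m => ∑ i, Lf p t A m i * X (i1 p t i) ^ d) := by
  rw [Fintype.linearIndependent_iff]
  intro g hg
  intro m'
  set i0 : Fin p := ⟨0, by omega⟩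
  have hrow : ∀ j' : Fin t, (∑ m, g m * A m j') = 0 := by
    intro j'
    have h1 := congrArg (lcoeff k
      (Finsupp.single (i2 p t j' i0) 1 + Finsupp.single (i1 p t i0) d)) hg
    rw [map_sum, map_zero] at h1
    simp only [map_smul, smul_eq_mul, lcoeff_apply] at h1
    have e1 : ∀ m : Fin c, g m *
        coeff (Finsupp.single (i2 p t j' i0) 1 + Finsupp.single (i1 p t i0) d)
          (∑ i, Lf p t A m i * X (i1 p t i) ^ d) = g m * A m j' := by
      intro m
      rw [coeff_sum]
      have e2 : ∀ i : Fin p,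
          coeff (Finsupp.single (i2 p t j' i0) 1 + Finsupp.single (i1 p t i0) d)
            (Lf p t A m i * X (i1 p t i) ^ d) = if i = i0 then A m j' else 0 :=
        fun i => coeff_d p t A m i i0 j' d
      rw [Finset.sum_congr rfl fun i _ => e2 i, Finset.sum_ite_eq' Finset.univ i0,
        if_pos (Finset.mem_univ i0)]
    rw [Finset.sum_congr rfl fun m _ => e1 m] at h1
    exact h1
  refine Fintype.linearIndependent_iff.mp hA (fun m => g m) ?_ m'
  funext j'
  simpa only [Finset.sum_apply, Pi.smul_apply, smul_eq_mul, Pi.zero_apply] using hrow j'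

end

end Ex211

open Ex211

/-- Example 2.11: in `S = k[y_1,…,y_{(t+1)p}]`, the forms
`F_j = ∑_{i=1}^p y_{jp+i}·y_i^{e-1}` (for `j = 1,…,t`) are linearly independent, every
`c`-dimensional subspace `W` of `V = ⟨F_1,…,F_t⟩` has `h_u(W) = (c+1)·p` for `1 ≤ u ≤ e-1`,
and in particular `h_u(V) = (t+1)·p`, so the bound of the Main Theorem is attained. -/
theorem example_2_11 {k : Type*} [Field k] [CharZero k]
    (p t e : ℕ) (hp : 1 ≤ p) (ht : 2 ≤ t) (he : 2 ≤ e)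
    (F : Fin t → MvPolynomial (Fin ((t + 1) * p)) k)
    (hF : ∀ j : Fin t, F j = ∑ i : Fin p,
      X (⟨(j.1 + 1) * p + i.1, by
            have h1 : j.1 + 1 + 1 ≤ t + 1 := by omega
            have h2 := i.2
            calc (j.1 + 1) * p + i.1 < (j.1 + 1) * p + p := by omega
              _ = (j.1 + 1 + 1) * p := by ring
              _ ≤ (t + 1) * p := Nat.mul_le_mul_right p h1⟩ : Fin ((t + 1) * p)) *
      X (⟨i.1, lt_of_lt_of_le i.2 (Nat.le_mul_of_pos_left p (by omega))⟩ :
            Fin ((t + 1) * p)) ^ (e - 1)) :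
    LinearIndependent k F ∧
    (∀ c : ℕ, 1 ≤ c → c ≤ t →
      ∀ W : Submodule k (MvPolynomial (Fin ((t + 1) * p)) k),
        W ≤ Submodule.span k (Set.range F) → Module.finrank k W = c →
        ∀ u : ℕ, 1 ≤ u → u ≤ e - 1 → hvec k e W u = (c + 1) * p) ∧
    (∀ u : ℕ, 1 ≤ u → u ≤ e - 1 →
      hvec k e (Submodule.span k (Set.range F)) u = (t + 1) * p) := by
  -- rewrite F in terms of `i1`/`i2`
  have hF' : ∀ j : Fin t, F j = ∑ i : Fin p,
      X (i2 p t j i) * X (i1 p t i) ^ (e - 1) := by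
    intro j; rw [hF]; rfl
  -- identity matrix
  set Aid : Fin t → Fin t → k := fun m j => if m = j then 1 else 0 with hAid_def
  have hAid : LinearIndependent k Aid := by
    rw [Fintype.linearIndependent_iff]
    intro g hg m
    have h1 := congrFun hg m
    simp only [Finset.sum_apply, Pi.smul_apply, smul_eq_mul, Pi.zero_apply, hAid_def] at h1
    rw [Finset.sum_congr rfl (fun m' _ => by
        rw [show (g m' * if m' = m then (1:k) else 0) = if m' = m then g m' else 0 by
          split_ifs <;> simp]),
      Finset.sum_ite_eq' Finset.univ m, if_pos (Finset.mem_univ m)] at h1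
    exact h1
  have hFdef : F = fun j => ∑ i, Lf p t Aid j i * X (i1 p t i) ^ (e - 1) := by
    funext j
    rw [hF' j]
    refine Finset.sum_congr rfl fun i _ => ?_
    congr 1
    rw [Lf]
    rw [Finset.sum_congr rfl (fun j' _ => by
        rw [show (Aid j j' • X (i2 p t j' i) : MvPolynomial (Fin ((t+1)*p)) k)
            = if j = j' then X (i2 p t j' i) else 0 by
          by_cases h : j = j' <;> simp [hAid_def, h]]),
      Finset.sum_ite_eq Finset.univ j, if_pos (Finset.mem_univ j)]
  have hFind : LinearIndependent k F := by
    rw [hFdef]; exact indep_G p t Aid hAid hp (e - 1)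
  have part2 : ∀ c : ℕ, 1 ≤ c → c ≤ t →
      ∀ W : Submodule k (MvPolynomial (Fin ((t + 1) * p)) k),
        W ≤ Submodule.span k (Set.range F) → Module.finrank k W = c →
        ∀ u : ℕ, 1 ≤ u → u ≤ e - 1 → hvec k e W u = (c + 1) * p := by
    intro c hc1 hc2 W hWV hWc u hu1 hu2
    haveI : FiniteDimensional k (Submodule.span k (Set.range F)) :=
      FiniteDimensional.span_of_finite k (Set.finite_range F)
    haveI : FiniteDimensional k W := Submodule.finiteDimensional_of_le hWV
    set B : Module.Basis (Fin c) k W := Module.finBasisOfFinrankEq k W hWc with hB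
    set G : Fin c → MvPolynomial (Fin ((t + 1) * p)) k := fun m => (B m : _) with hG
    have hGW : Submodule.span k (Set.range G) = W := by
      have h1 : Set.range G = W.subtype '' Set.range ⇑B := by
        rw [← Set.range_comp]; rfl
      rw [h1, ← Submodule.map_span, B.span_eq, Submodule.map_subtype_top]
    have hGV : ∀ m, G m ∈ Submodule.span k (Set.range F) := fun m => hWV (B m).2
    have hGA : ∀ m, ∃ a : Fin t → k, ∑ j, a j • F j = G m :=
      fun m => (Submodule.mem_span_range_iff_exists_fun k).mp (hGV m)
    choose A hA using hGA
    have hGind : LinearIndependent k G :=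
      B.linearIndependent.map' W.subtype W.ker_subtype
    have hAind : LinearIndependent k A := by
      rw [Fintype.linearIndependent_iff]
      intro g hg
      have h0 : (∑ m, g m • G m) = 0 := by
        have hstep : (∑ m, g m • G m) = ∑ j, (∑ m, g m * A m j) • F j := by
          rw [Finset.sum_congr rfl (fun m _ => by
            rw [← hA m, Finset.smul_sum])]
          rw [Finset.sum_comm]
          refine Finset.sum_congr rfl fun j _ => ?_
          rw [Finset.sum_smul]
          exact Finset.sum_congr rfl fun m _ => by rw [smul_smul]
        rw [hstep]
        refine Finset.sum_eq_zero fun j _ => ?_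
        have h1 := congrFun hg j
        simp only [Finset.sum_apply, Pi.smul_apply, smul_eq_mul, Pi.zero_apply] at h1
        rw [h1, zero_smul]
      exact Fintype.linearIndependent_iff.mp hGind g h0
    have hGdef : G = fun m => ∑ i, Lf p t A m i * X (i1 p t i) ^ (e - 1) := by
      funext m
      rw [← hA m]
      rw [Finset.sum_congr rfl (fun j _ => by rw [hF' j, Finset.smul_sum])]
      rw [Finset.sum_comm]
      refine Finset.sum_congr rfl fun i _ => ?_
      rw [Lf, Finset.sum_mul]
      exact Finset.sum_congr rfl fun j _ => by rw [smul_mul_assoc]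
    have m0 : Fin c := ⟨0, by omega⟩
    have hA0 : A m0 ≠ 0 := hAind.ne_zero m0
    obtain ⟨j0, hj0⟩ : ∃ j, A m0 j ≠ 0 := by
      by_contra hcon; push_neg at hcon; exact hA0 (funext hcon)
    have hiter := iterate_G p t A e he m0 j0 hj0 (e - u) (by omega) (by omega)
    have heu : e - (e - u) = u := by omega
    rw [hvec, ← hGW, hGdef, hiter, heu,
      finrank_span_eq_card (indep_Lg p t A hAind u hu1)]
    simp only [Fintype.card_sum, Fintype.card_prod, Fintype.card_fin]
    ring
  refine ⟨hFind, part2, ?_⟩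
  intro u hu1 hu2
  have hVt : Module.finrank k (Submodule.span k (Set.range F)) = t := by
    rw [finrank_span_eq_card hFind, Fintype.card_fin]
  exact part2 t (by omega) le_rfl _ le_rfl hVt u hu1 hu2
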